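/- Let g be a Lie algebra over a field and let b be a maximal solvable Lie subalgebra of g. Then b is self-normalizing: the normalizer of b in g equals b. -/

import Mathlib

/-- a maximal solvable Lie subalgebra of a Lie algebra over a
field is self-normalizing. -/
theorem maximal_solvable_self_normalizing
    {k : Type*} [Field k] {L : Type*} [LieRing L] [LieAlgebra k L]
    (b : LieSubalgebra k L) (hb : LieAlgebra.IsSolvable b)
    (hmax : ∀ c : LieSubalgebra k L, LieAlgebra.IsSolvable c → b ≤ c → c = b) :
    b.normalizer = b := by
  refine le_antisymm ?_ b.le_normalizer
  intro x hx
  -- the subalgebra K = (k ∙ x) ⊔ b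
  let K : LieSubalgebra k L :=
    { (k ∙ x) ⊔ (b : Submodule k L) with
      lie_mem' := fun hy hz => LieSubalgebra.lie_mem_sup_of_mem_normalizer hx hy hz }
  have hbK : b ≤ K := fun y hy => Submodule.mem_sup_right hy
  have hxK : x ∈ K := Submodule.mem_sup_left (Submodule.mem_span_singleton_self x)
  have hKnorm : K ≤ b.normalizer := by
    intro y hy
    rcases Submodule.mem_sup.mp hy with ⟨u, hu, v, hv, rfl⟩
    rcases Submodule.mem_span_singleton.mp hu with ⟨t, rfl⟩
    refine LieSubalgebra.normalizer b |>.add_mem ?_ (b.le_normalizer hv)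
    exact Submodule.smul_mem _ t hx
  obtain ⟨I, hI⟩ := LieSubalgebra.exists_nested_lieIdeal_ofLe_normalizer hbK hKnorm
  -- I is solvable, being isomorphic to b
  have hIsolv : LieAlgebra.IsSolvable I := by
    have : LieAlgebra.IsSolvable (LieSubalgebra.ofLe hbK) :=
      (LieAlgebra.solvable_iff_equiv_solvable (LieSubalgebra.equivOfLe hbK)).mp hb
    rw [← hI] at this
    exact this
  -- derived series of K drops into I after one step
  have hder : LieAlgebra.derivedSeries k K 1 ≤ I := by
    rw [LieAlgebra.derivedSeries_def, LieAlgebra.derivedSeriesOfIdeal_succ,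
      LieAlgebra.derivedSeriesOfIdeal_zero]
    rw [LieSubmodule.lie_le_iff]
    intro y _ z _
    have hyz : (⁅y, z⁆ : L) ∈ b := by
      have hy := y.2; have hz := z.2
      rcases Submodule.mem_sup.mp hy with ⟨u₁, hu₁, v, hv, hyv⟩
      rcases Submodule.mem_sup.mp hz with ⟨u₂, hu₂, w, hw, hzw⟩
      rcases Submodule.mem_span_singleton.mp hu₁ with ⟨t, rfl⟩
      rcases Submodule.mem_span_singleton.mp hu₂ with ⟨s, rfl⟩
      have : (⁅y, z⁆ : L) = ⁅(y : L), (z : L)⁆ := rfl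
      rw [this, ← hyv, ← hzw]
      simp only [add_lie, lie_add, smul_lie, lie_smul, lie_self, smul_zero, zero_add]
      refine b.add_mem (b.smul_mem s ?_) (b.add_mem (b.smul_mem t ?_) (b.lie_mem hv hw))
      · exact (b.mem_normalizer_iff' x).mp hx v hv
      · exact (b.mem_normalizer_iff x).mp hx w hw
    have : ⁅y, z⁆ ∈ (I : LieSubalgebra k K) := by
      rw [hI, LieSubalgebra.mem_ofLe]
      exact hyz
    exact this
  -- hence K is solvable
  have hKsolv : LieAlgebra.IsSolvable K := by
    obtain ⟨n, hn⟩ := (LieAlgebra.isSolvable_iff k I).mp hIsolv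
    refine (LieAlgebra.isSolvable_iff k K).mpr ⟨1 + n, ?_⟩
    rw [LieAlgebra.derivedSeries_def, add_comm, LieAlgebra.derivedSeriesOfIdeal_add]
    have h1 : LieAlgebra.derivedSeriesOfIdeal k K 1 ⊤ ≤ I := by
      rw [← LieAlgebra.derivedSeries_def]; exact hder
    exact le_bot_iff.mp ((LieAlgebra.derivedSeriesOfIdeal_le h1 le_rfl).trans_eq
      ((LieIdeal.derivedSeries_eq_bot_iff I n).mp hn))
  have := hmax K hKsolv hbK
  rw [← this]
  exact hxK
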